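/- Let x : I → ℝ² be C² with |x_ρ| > 0, suppose x(ρ₀)·e₁ = 0 and ν(ρ₀)·e₁ = 0 at an axis point ρ₀, where ν = −(x_ρ/|x_ρ|)^⊥. Then the limit of (ν·e₁)/(x·e₁) as ρ → ρ₀ exists and equals −κ(ρ₀), where κ is the curvature of the curve, i.e. lim_{ρ→ρ₀} (ν(ρ)·e₁)/(x(ρ)·e₁) = ν_s(ρ₀)·τ(ρ₀) = −κ(ρ₀). -/

import Mathlib

/-- Euclidean norm on `ℝ²` (represented as `ℝ × ℝ`). -/
noncomputable def enorm2 (v : ℝ × ℝ) : ℝ := Real.sqrt (v.1 ^ 2 + v.2 ^ 2)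

/-- Clockwise rotation by `π/2`. -/
def perp2 (v : ℝ × ℝ) : ℝ × ℝ := (v.2, -v.1)

/-- Unit tangent `τ = x_ρ / |x_ρ|`. -/
noncomputable def unitTangent (x : ℝ → ℝ × ℝ) (ρ : ℝ) : ℝ × ℝ :=
  (enorm2 (deriv x ρ))⁻¹ • deriv x ρ

/-- Unit normal `ν = −τ^⊥`. -/
noncomputable def normalVec (x : ℝ → ℝ × ℝ) (ρ : ℝ) : ℝ × ℝ :=
  - perp2 (unitTangent x ρ)

/-- Euclidean dot product on `ℝ²`. -/
def dot2 (a b : ℝ × ℝ) : ℝ := a.1 * b.1 + a.2 * b.2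

/-- At an axis point `ρ₀` with `x(ρ₀)·e₁ = 0` and `ν(ρ₀)·e₁ = 0`, one has
`ν_s(ρ₀)·τ(ρ₀) = −κ(ρ₀)` and `lim_{ρ→ρ₀} (ν·e₁)/(x·e₁) = −κ(ρ₀)`,
where `κ` is the curvature defined by `κ ν = τ_s`. -/
theorem axis_limit_curvature (x : ℝ → ℝ × ℝ) (κ : ℝ → ℝ) (ρ₀ : ℝ)
    (hx : ContDiff ℝ 2 x)
    (hreg : ∀ ρ, 0 < enorm2 (deriv x ρ))
    (haxis : (x ρ₀).1 = 0)
    (hν : (normalVec x ρ₀).1 = 0)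
    (hκ : ∀ ρ, κ ρ • normalVec x ρ =
      (enorm2 (deriv x ρ))⁻¹ • deriv (fun σ => unitTangent x σ) ρ) :
    dot2 ((enorm2 (deriv x ρ₀))⁻¹ • deriv (fun σ => normalVec x σ) ρ₀)
        (unitTangent x ρ₀) = -κ ρ₀
    ∧ Filter.Tendsto (fun ρ => (normalVec x ρ).1 / (x ρ).1)
        (nhdsWithin ρ₀ {ρ₀}ᶜ) (nhds (-κ ρ₀)) := by
  -- basic differentiability facts
  have hdd : Differentiable ℝ (deriv x) := by
    have h := (contDiff_succ_iff_deriv (n := 1)).1 (by exact_mod_cast hx)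
    exact (h.2.2).differentiable one_ne_zero
  have hpos : ∀ ρ, 0 < (deriv x ρ).1 ^ 2 + (deriv x ρ).2 ^ 2 := by
    intro ρ
    have h := hreg ρ
    unfold enorm2 at h
    nlinarith [Real.sqrt_nonneg ((deriv x ρ).1 ^ 2 + (deriv x ρ).2 ^ 2),
      Real.sq_sqrt (by positivity : (0:ℝ) ≤ (deriv x ρ).1 ^ 2 + (deriv x ρ).2 ^ 2)]
  have hnsq : ∀ ρ, (enorm2 (deriv x ρ)) ^ 2 = (deriv x ρ).1 ^ 2 + (deriv x ρ).2 ^ 2 := by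
    intro ρ
    exact Real.sq_sqrt (hpos ρ).le
  have hτdiff : Differentiable ℝ (unitTangent x) := by
    intro ρ
    have hn : DifferentiableAt ℝ (fun ρ => enorm2 (deriv x ρ)) ρ := by
      unfold enorm2
      exact DifferentiableAt.sqrt (((hdd ρ).fst.pow 2).add ((hdd ρ).snd.pow 2)) (hpos ρ).ne'
    exact ((hn.inv (hreg ρ).ne').smul (hdd ρ))
  set n₀ : ℝ := enorm2 (deriv x ρ₀) with hn₀
  have hn₀ne : n₀ ≠ 0 := (hreg ρ₀).ne'
  -- derivative of the unit tangent via hκ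
  have hT : deriv (fun σ => unitTangent x σ) ρ₀ = (n₀ * κ ρ₀) • normalVec x ρ₀ := by
    have h := congrArg (fun v => n₀ • v) (hκ ρ₀)
    simp only [smul_smul, ← hn₀, mul_inv_cancel₀ hn₀ne, one_smul] at h
    exact h.symm
  set T : ℝ × ℝ := deriv (fun σ => unitTangent x σ) ρ₀ with hTdef
  have hτd : HasDerivAt (unitTangent x) T ρ₀ := (hτdiff ρ₀).hasDerivAt
  have h1 : HasDerivAt (fun σ => (unitTangent x σ).1) T.1 ρ₀ :=
    (ContinuousLinearMap.fst ℝ ℝ ℝ).hasFDerivAt.comp_hasDerivAt ρ₀ hτd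
  have h2 : HasDerivAt (fun σ => (unitTangent x σ).2) T.2 ρ₀ :=
    (ContinuousLinearMap.snd ℝ ℝ ℝ).hasFDerivAt.comp_hasDerivAt ρ₀ hτd
  have hνfun : (fun σ => normalVec x σ)
      = fun σ => (-(unitTangent x σ).2, (unitTangent x σ).1) := by
    funext σ
    simp [normalVec, perp2, Prod.ext_iff]
  have hνd : HasDerivAt (fun σ => normalVec x σ) (-T.2, T.1) ρ₀ := by
    rw [hνfun]
    exact (h2.neg).prodMk h1
  have hνderiv : deriv (fun σ => normalVec x σ) ρ₀ = (-T.2, T.1) := hνd.deriv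
  -- components
  set v1 : ℝ := (deriv x ρ₀).1 with hv1
  set v2 : ℝ := (deriv x ρ₀).2 with hv2
  have hτ0 : unitTangent x ρ₀ = (n₀⁻¹ * v1, n₀⁻¹ * v2) := by
    simp [unitTangent, Prod.ext_iff, ← hn₀, hv1, hv2, Prod.smul_def]
  have hν0 : normalVec x ρ₀ = (-(n₀⁻¹ * v2), n₀⁻¹ * v1) := by
    simp [normalVec, perp2, hτ0, Prod.ext_iff]
  have hTval : T = ((n₀ * κ ρ₀) * (-(n₀⁻¹ * v2)), (n₀ * κ ρ₀) * (n₀⁻¹ * v1)) := by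
    rw [hT, hν0]
    simp [Prod.smul_def, Prod.ext_iff]
  have hnormsq : n₀ ^ 2 = v1 ^ 2 + v2 ^ 2 := hnsq ρ₀
  constructor
  · -- first goal
    rw [hνderiv, hTval, hτ0]
    simp only [dot2, Prod.smul_def, smul_eq_mul]
    field_simp
    linear_combination (κ ρ₀) * hnormsq
  · -- the limit
    have h0 : n₀⁻¹ * v2 = 0 := by
      have h' := hν
      rw [hν0] at h'
      simpa [neg_eq_zero] using h'
    have hv2zero : v2 = 0 := by
      rcases mul_eq_zero.1 h0 with h | h
      · exact absurd h (inv_ne_zero hn₀ne)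
      · exact h
    have hv1ne : v1 ≠ 0 := by
      intro h
      have := hpos ρ₀
      rw [← hv1, ← hv2] at this
      rw [h, hv2zero] at this
      norm_num at this
    have hfd : HasDerivAt (fun ρ => (normalVec x ρ).1) (-T.2) ρ₀ :=
      (ContinuousLinearMap.fst ℝ ℝ ℝ).hasFDerivAt.comp_hasDerivAt ρ₀ hνd
    have hgd : HasDerivAt (fun ρ => (x ρ).1) v1 ρ₀ := by
      have hxd : HasDerivAt x (deriv x ρ₀) ρ₀ :=
        ((hx.differentiable (by norm_num)) ρ₀).hasDerivAt
      exact (ContinuousLinearMap.fst ℝ ℝ ℝ).hasFDerivAt.comp_hasDerivAt ρ₀ hxd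
    have hT2 : -T.2 = -(κ ρ₀ * v1) := by
      rw [hTval]
      field_simp
    have hf := hasDerivAt_iff_tendsto_slope.1 hfd
    have hg := hasDerivAt_iff_tendsto_slope.1 hgd
    have hdiv : Filter.Tendsto (fun ρ => slope (fun ρ => (normalVec x ρ).1) ρ₀ ρ /
        slope (fun ρ => (x ρ).1) ρ₀ ρ) (nhdsWithin ρ₀ {ρ₀}ᶜ) (nhds (-T.2 / v1)) :=
      hf.div hg hv1ne
    have hval : -T.2 / v1 = -κ ρ₀ := by
      rw [hT2]
      field_simp
    rw [hval] at hdiv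
    refine hdiv.congr' ?_
    filter_upwards [self_mem_nhdsWithin] with ρ hρ
    have hρne : ρ - ρ₀ ≠ 0 := sub_ne_zero.2 (by simpa using hρ)
    rw [slope_def_field, slope_def_field, hν, haxis, sub_zero, sub_zero]
    rcases eq_or_ne ((x ρ).1) 0 with h | h
    · simp [h]
    · field_simp
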